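/- For m, n ∈ ℤ, let g_m(t) = ∑_{i≥0} λ_i 4^i t^{m-i+1} ∈ ℂ((t⁻¹)). Then the coefficient of t^{-1} in g_m'(t) · g_n(t) equals (4m+2) δ_{m+n+1,0} + (m+1) δ_{m+n+2,0}. -/

import Mathlib

noncomputable def lam (n : ℕ) : ℂ :=
  (∏ k ∈ Finset.range n, ((1 : ℂ) / 2 - k)) / n.factorial

/-- We model ℂ((t⁻¹)) as formal Laurent series in s = t⁻¹, so that t^k
corresponds to `HahnSeries.single (-k) 1`. -/
noncomputable def lderiv (F : LaurentSeries ℂ) : LaurentSeries ℂ where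
  coeff k := (k + 1 : ℤ) • F.coeff (k + 1)
  isPWO_support' := by
    have h : (Function.support fun k : ℤ => (k + 1 : ℤ) • F.coeff (k + 1)) ⊆
        (fun k : ℤ => k - 1) '' F.support := by
      intro k hk
      simp only [Function.mem_support] at hk
      refine ⟨k + 1, ?_, by ring⟩
      simp only [HahnSeries.mem_support]
      intro h0
      apply hk
      rw [h0, smul_zero]
    exact (F.isPWO_support.image_of_monotone (fun a b hab => by omega)).mono h

/-- The derivative d/dt, acting on series in s = t⁻¹: d/dt = -s² d/ds. -/
noncomputable def tderiv (F : LaurentSeries ℂ) : LaurentSeries ℂ :=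
  -(HahnSeries.single (2 : ℤ) (1 : ℂ) * lderiv F)

/-- u = ∑_{i≥0} λ_i 4^i t^{1-i}, i.e. ∑_{i≥0} λ_i 4^i s^{i-1}. -/
noncomputable def uInf : LaurentSeries ℂ :=
  HahnSeries.single (-1 : ℤ) (1 : ℂ) *
    HahnSeries.ofPowerSeries ℤ ℂ (PowerSeries.mk fun i => lam i * 4 ^ i)

/-- g_m = ∑_{i≥0} λ_i 4^i t^{m-i+1} = t^m · u, i.e. s^{-m} · uInf. -/
noncomputable def g (m : ℤ) : LaurentSeries ℂ :=
  HahnSeries.single (-m : ℤ) (1 : ℂ) * uInf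

open Finset HahnSeries

noncomputable def Pser : PowerSeries ℂ := PowerSeries.mk fun i => lam i * 4 ^ i

noncomputable def Qser (m : ℤ) : PowerSeries ℂ :=
  PowerSeries.mk fun i => lam i * 4 ^ i * ((m : ℂ) + 1 - i)

lemma single_one_mul_coeff (a : ℤ) (F : LaurentSeries ℂ) (k : ℤ) :
    (HahnSeries.single a (1 : ℂ) * F).coeff k = F.coeff (k - a) := by
  conv_lhs => rw [show k = (k - a) + a by ring]
  rw [HahnSeries.coeff_single_mul_add, one_mul]

lemma shift_coeff (f : PowerSeries ℂ) (a k : ℤ) :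
    (HahnSeries.single a (1 : ℂ) * HahnSeries.ofPowerSeries ℤ ℂ f).coeff k =
      if 0 ≤ k - a then PowerSeries.coeff (k - a).toNat f else 0 := by
  rw [single_one_mul_coeff]
  split_ifs with hka
  · conv_lhs => rw [← Int.toNat_of_nonneg hka]
    rw [HahnSeries.ofPowerSeries_apply_coeff]
  · rw [HahnSeries.ofPowerSeries_apply]
    apply HahnSeries.embDomain_notin_range
    rintro ⟨j, hj⟩
    have hj' : (j : ℤ) = k - a := hj
    omega

lemma g_eq (m : ℤ) :
    g m = HahnSeries.single (-m - 1 : ℤ) (1 : ℂ) * HahnSeries.ofPowerSeries ℤ ℂ Pser := by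
  rw [g, uInf, ← mul_assoc, HahnSeries.single_mul_single, one_mul]
  congr 2 <;> ring

lemma tderiv_g (m : ℤ) :
    tderiv (g m) = HahnSeries.single (-m : ℤ) (1 : ℂ) *
      HahnSeries.ofPowerSeries ℤ ℂ (Qser m) := by
  ext k
  rw [tderiv, HahnSeries.coeff_neg, single_one_mul_coeff, shift_coeff]
  show -((k - 2 + 1 : ℤ) • (g m).coeff (k - 2 + 1)) = _
  rw [g_eq, shift_coeff]
  have hs : k - 2 + 1 - (-m - 1) = k + m := by ring
  have hs2 : k - (-m) = k + m := by ring
  rw [hs, hs2]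
  split_ifs with hc
  · rw [Pser, Qser, PowerSeries.coeff_mk, PowerSeries.coeff_mk, zsmul_eq_mul]
    have hcast : (((k + m).toNat : ℂ)) = ((k + m : ℤ) : ℂ) := by
      exact_mod_cast congrArg (Int.cast : ℤ → ℂ) (Int.toNat_of_nonneg hc)
    rw [hcast]
    push_cast
    ring
  · simp

lemma lam_eq_choose (n : ℕ) : lam n = Ring.choose ((1 : ℂ) / 2) n := by
  have hev : (descPochhammer ℤ n).smeval ((1 : ℂ)/2) = ∏ k ∈ range n, ((1 : ℂ)/2 - k) := by
    rw [← Polynomial.aeval_eq_smeval, Polynomial.aeval_def, ← Polynomial.eval_map,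
      descPochhammer_map]
    induction n with
    | zero => simp
    | succ n ih => rw [descPochhammer_succ_eval, ih, prod_range_succ]
  have h := Ring.descPochhammer_eq_factorial_smul_choose ((1 : ℂ)/2) n
  rw [hev, nsmul_eq_mul] at h
  rw [lam, h]
  exact mul_div_cancel_left₀ _ (by exact_mod_cast n.factorial_ne_zero)

lemma sum_lam (N : ℕ) :
    ∑ p ∈ antidiagonal N, lam p.1 * lam p.2 = if N ≤ 1 then 1 else 0 := by
  have h := Ring.add_choose_eq (R := ℂ) (r := (1:ℂ)/2) (s := (1:ℂ)/2) N (Commute.all _ _)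
  have h1 : ((1:ℂ)/2 + (1:ℂ)/2) = ((1 : ℕ) : ℂ) := by norm_num
  rw [h1, Ring.choose_natCast] at h
  calc ∑ p ∈ antidiagonal N, lam p.1 * lam p.2
      = ∑ ij ∈ antidiagonal N, Ring.choose ((1:ℂ)/2) ij.1 * Ring.choose ((1:ℂ)/2) ij.2 :=
        Finset.sum_congr rfl fun p _ => by rw [lam_eq_choose, lam_eq_choose]
    _ = ((Nat.choose 1 N : ℕ) : ℂ) := h.symm
    _ = _ := by rcases N with _ | _ | N <;> simp [Nat.choose]

lemma sum_lam_wt (N : ℕ) :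
    ∑ p ∈ antidiagonal N, (p.1 : ℂ) * (lam p.1 * lam p.2) =
      (N : ℂ) / 2 * (if N ≤ 1 then 1 else 0) := by
  have hswap : ∑ p ∈ antidiagonal N, (p.1 : ℂ) * (lam p.1 * lam p.2) =
      ∑ p ∈ antidiagonal N, (p.2 : ℂ) * (lam p.1 * lam p.2) := by
    rw [← Finset.Nat.sum_antidiagonal_swap (f := fun p => (p.1 : ℂ) * (lam p.1 * lam p.2))]
    exact Finset.sum_congr rfl fun p _ => by simp [mul_comm]
  have hdouble : (2 : ℂ) * ∑ p ∈ antidiagonal N, (p.1 : ℂ) * (lam p.1 * lam p.2) =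
      (N : ℂ) * ∑ p ∈ antidiagonal N, lam p.1 * lam p.2 := by
    rw [two_mul]
    nth_rewrite 2 [hswap]
    rw [← Finset.sum_add_distrib, Finset.mul_sum]
    refine Finset.sum_congr rfl fun p hp => ?_
    have hpN : p.1 + p.2 = N := Finset.HasAntidiagonal.mem_antidiagonal.mp hp
    have : ((p.1 : ℂ) + p.2) = (N : ℂ) := by exact_mod_cast congrArg (Nat.cast : ℕ → ℂ) hpN
    rw [← add_mul, this]
  rw [sum_lam] at hdouble
  have h2 : (2 : ℂ) ≠ 0 := two_ne_zero
  linear_combination hdouble / 2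

lemma coeff_QP (m : ℤ) (N : ℕ) :
    PowerSeries.coeff N (Qser m * Pser) =
      (4 * (m : ℂ) + 2) * (if N = 1 then 1 else 0) +
        ((m : ℂ) + 1) * (if N = 0 then 1 else 0) := by
  rw [PowerSeries.coeff_mul]
  have hstep : ∀ p ∈ antidiagonal N,
      PowerSeries.coeff p.1 (Qser m) * PowerSeries.coeff p.2 Pser =
        (4 : ℂ) ^ N * (((m : ℂ) + 1) * (lam p.1 * lam p.2)
          - (p.1 : ℂ) * (lam p.1 * lam p.2)) := by
    intro p hp
    have hpN : p.1 + p.2 = N := Finset.HasAntidiagonal.mem_antidiagonal.mp hp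
    rw [Qser, Pser, PowerSeries.coeff_mk, PowerSeries.coeff_mk]
    rw [← hpN, _root_.pow_add]
    ring
  rw [Finset.sum_congr rfl hstep, ← Finset.mul_sum]
  rw [Finset.sum_sub_distrib, ← Finset.mul_sum, sum_lam, sum_lam_wt]
  rcases N with _ | _ | N <;> norm_num <;> ring

theorem res_gderiv_mul_g (m n : ℤ) :
    (tderiv (g m) * g n).coeff 1 =
      (4 * m + 2 : ℂ) * (if m + n + 1 = 0 then 1 else 0) +
        (m + 1 : ℂ) * (if m + n + 2 = 0 then 1 else 0) := by
  have hprod : tderiv (g m) * g n =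
      HahnSeries.single (-m + (-n - 1) : ℤ) (1 : ℂ) *
        HahnSeries.ofPowerSeries ℤ ℂ (Qser m * Pser) := by
    rw [tderiv_g, g_eq, mul_mul_mul_comm, HahnSeries.single_mul_single, one_mul, map_mul]
  rw [hprod, shift_coeff]
  have harg : (1 : ℤ) - (-m + (-n - 1)) = m + n + 2 := by ring
  rw [harg]
  by_cases hc : (0 : ℤ) ≤ m + n + 2
  · rw [if_pos hc, coeff_QP]
    have h1 : ((m + n + 2).toNat = 1) ↔ (m + n + 1 = 0) := by omega
    have h0 : ((m + n + 2).toNat = 0) ↔ (m + n + 2 = 0) := by omega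
    simp only [h1, h0]
  · rw [if_neg hc]
    have ha : ¬(m + n + 1 = 0) := by omega
    have hb : ¬(m + n + 2 = 0) := by omega
    simp [ha, hb]
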